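/- Let A be a densely defined symmetric operator on a complex Hilbert space ℋ and N ≥ 1 a self-adjoint operator with D(N) ⊆ D(A), such that |⟨Av, v⟩| ≤ ⟨Nv, v⟩ for all v ∈ D(N). Then for all v ∈ D(N), ‖N^{-1/2}Av‖ ≤ ‖N^{1/2}v‖, i.e., A is bounded from ℋ₁ to ℋ₋₁ with norm at most 1. -/

import Mathlib

open scoped InnerProductSpace

/-- If `A` is densely defined symmetric, `N ≥ 1` self-adjoint with `D(N) ⊆ D(A)`, square root
`Rhalf = N^{1/2}` and bounded inverse square root `Rneg = N^{-1/2}`, and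
`|⟨Av, v⟩| ≤ ⟨Nv, v⟩` for all `v ∈ D(N)`, then `‖N^{-1/2}Av‖ ≤ ‖N^{1/2}v‖` for `v ∈ D(N)`,
i.e. `A` is bounded from `ℋ₁` to `ℋ₋₁` with norm at most `1`. -/
theorem stmt11
    {H : Type*} [NormedAddCommGroup H] [InnerProductSpace ℂ H] [CompleteSpace H]
    (A N Rhalf : H →ₗ.[ℂ] H) (Rneg : H →L[ℂ] H)
    (hAdense : Dense (A.domain : Set H))
    (hAsym : ∀ v w : A.domain, ⟪A v, (w : H)⟫_ℂ = ⟪(v : H), A w⟫_ℂ)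
    (hNdense : Dense (N.domain : Set H)) (hNsa : N.adjoint = N)
    (hgeone : ∀ v : N.domain, ‖(v : H)‖ ^ 2 ≤ (⟪N v, (v : H)⟫_ℂ).re)
    (hNR : N.domain ≤ Rhalf.domain)
    (hsq_mem : ∀ v : N.domain, Rhalf ⟨(v : H), hNR v.prop⟩ ∈ Rhalf.domain)
    (hsq : ∀ v : N.domain,
      Rhalf ⟨Rhalf ⟨(v : H), hNR v.prop⟩, hsq_mem v⟩ = N v)
    (hnormsq : ∀ v : N.domain,
      (⟪N v, (v : H)⟫_ℂ).re = ‖Rhalf ⟨(v : H), hNR v.prop⟩‖ ^ 2)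
    (hinv : ∀ v : Rhalf.domain, Rneg (Rhalf v) = (v : H))
    (hRnegnorm : ‖Rneg‖ ≤ 1)
    (hDA : N.domain ≤ A.domain)
    (hbound : ∀ v : N.domain,
      ‖⟪A ⟨(v : H), hDA v.prop⟩, (v : H)⟫_ℂ‖ ≤ (⟪N v, (v : H)⟫_ℂ).re) :
    ∀ v : N.domain,
      ‖Rneg (A ⟨(v : H), hDA v.prop⟩)‖ ≤ ‖Rhalf ⟨(v : H), hNR v.prop⟩‖ := by
  classical
  -- abbreviations (definitional)
  let Rh : N.domain → H := fun u => Rhalf ⟨(u : H), hNR u.prop⟩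
  let B : N.domain → N.domain → ℂ :=
    fun u u' => ⟪A ⟨(u : H), hDA u.prop⟩, (u' : H)⟫_ℂ
  -- norm comparison ‖u‖ ≤ ‖Rh u‖
  have hnormle : ∀ u : N.domain, ‖(u : H)‖ ≤ ‖Rh u‖ := by
    intro u
    have h1 := hgeone u
    rw [hnormsq u] at h1
    nlinarith [norm_nonneg (u : H), norm_nonneg (Rh u)]
  -- Rh is additive / homogeneous
  have hRhadd : ∀ u u' : N.domain, Rh (u + u') = Rh u + Rh u' := by
    intro u u'
    have h : (⟨((u + u' : N.domain) : H), hNR (u + u').prop⟩ : Rhalf.domain)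
        = ⟨(u : H), hNR u.prop⟩ + ⟨(u' : H), hNR u'.prop⟩ := by ext; rfl
    show Rhalf _ = _
    rw [h, Rhalf.map_add]
  have hRhsub : ∀ u u' : N.domain, Rh (u - u') = Rh u - Rh u' := by
    intro u u'
    have h : (⟨((u - u' : N.domain) : H), hNR (u - u').prop⟩ : Rhalf.domain)
        = ⟨(u : H), hNR u.prop⟩ - ⟨(u' : H), hNR u'.prop⟩ := by ext; rfl
    show Rhalf _ = _
    rw [h, Rhalf.map_sub]
  have hRhsmul : ∀ (c : ℂ) (u : N.domain), Rh (c • u) = c • Rh u := by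
    intro c u
    have h : (⟨((c • u : N.domain) : H), hNR (c • u).prop⟩ : Rhalf.domain)
        = c • ⟨(u : H), hNR u.prop⟩ := by ext; rfl
    show Rhalf _ = _
    rw [h, Rhalf.map_smul]
  -- A-part is additive / homogeneous
  have hAadd : ∀ u u' : N.domain,
      A ⟨((u + u' : N.domain) : H), hDA (u + u').prop⟩
        = A ⟨(u : H), hDA u.prop⟩ + A ⟨(u' : H), hDA u'.prop⟩ := by
    intro u u'
    have h : (⟨((u + u' : N.domain) : H), hDA (u + u').prop⟩ : A.domain)
        = ⟨(u : H), hDA u.prop⟩ + ⟨(u' : H), hDA u'.prop⟩ := by ext; rfl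
    rw [h, A.map_add]
  have hAsub : ∀ u u' : N.domain,
      A ⟨((u - u' : N.domain) : H), hDA (u - u').prop⟩
        = A ⟨(u : H), hDA u.prop⟩ - A ⟨(u' : H), hDA u'.prop⟩ := by
    intro u u'
    have h : (⟨((u - u' : N.domain) : H), hDA (u - u').prop⟩ : A.domain)
        = ⟨(u : H), hDA u.prop⟩ - ⟨(u' : H), hDA u'.prop⟩ := by ext; rfl
    rw [h, A.map_sub]
  have hAsmul : ∀ (c : ℂ) (u : N.domain),
      A ⟨((c • u : N.domain) : H), hDA (c • u).prop⟩
        = c • A ⟨(u : H), hDA u.prop⟩ := by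
    intro c u
    have h : (⟨((c • u : N.domain) : H), hDA (c • u).prop⟩ : A.domain)
        = c • ⟨(u : H), hDA u.prop⟩ := by ext; rfl
    rw [h, A.map_smul]
  -- Hermitian symmetry of B
  have hBsymm : ∀ u u' : N.domain, B u' u = starRingEnd ℂ (B u u') := by
    intro u u'
    show (⟪A ⟨(u' : H), hDA u'.prop⟩, (u : H)⟫_ℂ) = _
    rw [hAsym ⟨(u' : H), hDA u'.prop⟩ ⟨(u : H), hDA u.prop⟩]
    exact (inner_conj_symm _ _).symm
  -- quadratic bound
  have hQ : ∀ u : N.domain, ‖B u u‖ ≤ ‖Rh u‖ ^ 2 := by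
    intro u
    have h := hbound u
    rw [hnormsq u] at h
    exact h
  -- expansion of the quadratic form
  have hexp : ∀ u u' : N.domain,
      B (u + u') (u + u') = B u u + B u u' + B u' u + B u' u' := by
    intro u u'
    show (⟪A ⟨((u + u' : N.domain) : H), hDA (u + u').prop⟩, ((u + u' : N.domain) : H)⟫_ℂ) = _
    rw [hAadd u u', show ((u + u' : N.domain) : H) = (u : H) + (u' : H) from rfl,
      inner_add_left, inner_add_right, inner_add_right]
    ring
  have hexps : ∀ u u' : N.domain,
      B (u - u') (u - u') = B u u - B u u' - B u' u + B u' u' := by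
    intro u u'
    show (⟪A ⟨((u - u' : N.domain) : H), hDA (u - u').prop⟩, ((u - u' : N.domain) : H)⟫_ℂ) = _
    rw [hAsub u u', show ((u - u' : N.domain) : H) = (u : H) - (u' : H) from rfl,
      inner_sub_left, inner_sub_right, inner_sub_right]
    ring
  -- key real-part inequality
  have h4Re : ∀ u u' : N.domain,
      4 * (B u u').re ≤ 2 * ‖Rh u‖ ^ 2 + 2 * ‖Rh u'‖ ^ 2 := by
    intro u u'
    have e1 : B (u + u') (u + u') - B (u - u') (u - u')
        = 2 * B u u' + 2 * starRingEnd ℂ (B u u') := by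
      rw [hexp u u', hexps u u', hBsymm u u']
      ring
    have e2 : (B (u + u') (u + u')).re - (B (u - u') (u - u')).re
        = 4 * (B u u').re := by
      have h := congrArg Complex.re e1
      simp only [Complex.sub_re, Complex.add_re, Complex.mul_re, Complex.conj_re,
        Complex.conj_im, Complex.re_ofNat, Complex.im_ofNat] at h
      linarith
    have f1 : (B (u + u') (u + u')).re ≤ ‖Rh u + Rh u'‖ ^ 2 := by
      calc (B (u + u') (u + u')).re ≤ ‖B (u + u') (u + u')‖ := by
            exact Complex.re_le_norm _
        _ ≤ ‖Rh (u + u')‖ ^ 2 := hQ _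
        _ = ‖Rh u + Rh u'‖ ^ 2 := by rw [hRhadd]
    have f2 : -(B (u - u') (u - u')).re ≤ ‖Rh u - Rh u'‖ ^ 2 := by
      calc -(B (u - u') (u - u')).re ≤ ‖B (u - u') (u - u')‖ := by
            have h := abs_le.mp (Complex.abs_re_le_norm (B (u - u') (u - u')))
            linarith [h.1]
        _ ≤ ‖Rh (u - u')‖ ^ 2 := hQ _
        _ = ‖Rh u - Rh u'‖ ^ 2 := by rw [hRhsub]
    have hpar := parallelogram_law_with_norm ℂ (Rh u) (Rh u')
    nlinarith [f1, f2, e2, hpar]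
  -- real-part Cauchy-Schwarz
  have hRe : ∀ u u' : N.domain, (B u u').re ≤ ‖Rh u‖ * ‖Rh u'‖ := by
    intro u u'
    by_cases hu : Rh u = 0
    · have hu0 : (u : H) = 0 := by
        have h := hnormle u
        rw [hu, norm_zero] at h
        exact norm_le_zero_iff.mp h
      have hz : B u u' = 0 := by
        show (⟪A ⟨(u : H), hDA u.prop⟩, (u' : H)⟫_ℂ) = 0
        have h : (⟨(u : H), hDA u.prop⟩ : A.domain) = 0 := by ext; exact hu0
        rw [h, A.map_zero, inner_zero_left]
      rw [hz]
      simp [hu]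
    by_cases hu' : Rh u' = 0
    · have hu0 : (u' : H) = 0 := by
        have h := hnormle u'
        rw [hu', norm_zero] at h
        exact norm_le_zero_iff.mp h
      have hz : B u u' = 0 := by
        show (⟪A ⟨(u : H), hDA u.prop⟩, (u' : H)⟫_ℂ) = 0
        rw [hu0, inner_zero_right]
      rw [hz]
      simp [hu']
    · have ha : (0:ℝ) < ‖Rh u‖ := norm_pos_iff.mpr hu
      have hb : (0:ℝ) < ‖Rh u'‖ := norm_pos_iff.mpr hu'
      set a := ‖Rh u‖ with haa
      set b := ‖Rh u'‖ with hbb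
      have hn1 : ‖Rh (((a⁻¹ : ℝ) : ℂ) • u)‖ = 1 := by
        rw [hRhsmul, norm_smul, Complex.norm_real, Real.norm_eq_abs,
          abs_of_pos (inv_pos.mpr ha), ← haa]
        field_simp
      have hn2 : ‖Rh (((b⁻¹ : ℝ) : ℂ) • u')‖ = 1 := by
        rw [hRhsmul, norm_smul, Complex.norm_real, Real.norm_eq_abs,
          abs_of_pos (inv_pos.mpr hb), ← hbb]
        field_simp
      have hBsc : B (((a⁻¹ : ℝ) : ℂ) • u) (((b⁻¹ : ℝ) : ℂ) • u')
          = ((a⁻¹ * b⁻¹ : ℝ) : ℂ) * B u u' := by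
        show (⟪A ⟨((((a⁻¹ : ℝ) : ℂ) • u : N.domain) : H), hDA (((a⁻¹ : ℝ) : ℂ) • u).prop⟩,
          ((((b⁻¹ : ℝ) : ℂ) • u' : N.domain) : H)⟫_ℂ) = _
        rw [hAsmul ((a⁻¹ : ℝ) : ℂ) u,
          show ((((b⁻¹ : ℝ) : ℂ) • u' : N.domain) : H) = ((b⁻¹ : ℝ) : ℂ) • (u' : H) from rfl,
          inner_smul_left, inner_smul_right, Complex.conj_ofReal]
        push_cast
        ring
      have h4 := h4Re (((a⁻¹ : ℝ) : ℂ) • u) (((b⁻¹ : ℝ) : ℂ) • u')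
      rw [hn1, hn2] at h4
      have hre : (B (((a⁻¹ : ℝ) : ℂ) • u) (((b⁻¹ : ℝ) : ℂ) • u')).re
          = a⁻¹ * b⁻¹ * (B u u').re := by
        rw [hBsc]
        simp [Complex.mul_re]
      rw [hre] at h4
      have hle1 : a⁻¹ * b⁻¹ * (B u u').re ≤ 1 := by nlinarith
      calc (B u u').re = a * b * (a⁻¹ * b⁻¹ * (B u u').re) := by
            field_simp
        _ ≤ a * b * 1 := mul_le_mul_of_nonneg_left hle1 (by positivity)
        _ = a * b := by ring
  -- full Cauchy-Schwarz
  have hCS : ∀ u u' : N.domain, ‖B u u'‖ ≤ ‖Rh u‖ * ‖Rh u'‖ := by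
    intro u u'
    by_cases hz : B u u' = 0
    · rw [hz, norm_zero]; positivity
    · set c : ℂ := (‖B u u'‖ : ℂ) / B u u' with hc
      have hcnorm : ‖c‖ = 1 := by
        rw [hc, norm_div, Complex.norm_real, Real.norm_eq_abs, abs_norm,
          div_self (norm_ne_zero_iff.mpr hz)]
      have hkey : B (starRingEnd ℂ c • u) u' = (‖B u u'‖ : ℂ) := by
        show (⟪A ⟨((starRingEnd ℂ c • u : N.domain) : H),
          hDA (starRingEnd ℂ c • u).prop⟩, (u' : H)⟫_ℂ) = _
        rw [hAsmul (starRingEnd ℂ c) u, inner_smul_left, Complex.conj_conj]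
        show c * B u u' = _
        rw [hc]
        exact div_mul_cancel₀ _ hz
      have hRhn : ‖Rh (starRingEnd ℂ c • u)‖ = ‖Rh u‖ := by
        rw [hRhsmul, norm_smul, RCLike.norm_conj, hcnorm, one_mul]
      have h := hRe (starRingEnd ℂ c • u) u'
      rw [hkey, hRhn, Complex.ofReal_re] at h
      exact h
  -- the range of N is dense
  have hdense : Dense ((LinearMap.range N.toFun : Submodule ℂ H) : Set H) := by
    rw [Submodule.dense_iff_topologicalClosure_eq_top,
      Submodule.topologicalClosure_eq_top_iff, Submodule.eq_bot_iff]
    intro y hy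
    have hyo : ∀ u : N.domain, ⟪N u, y⟫_ℂ = 0 := fun u =>
      (Submodule.mem_orthogonal _ _).mp hy (N u) ⟨u, rfl⟩
    have hymem : y ∈ N.domain := by
      have h : y ∈ N.adjoint.domain := by
        apply LinearPMap.mem_adjoint_domain_of_exists
        refine ⟨0, fun x => ?_⟩
        rw [inner_zero_left, ← inner_conj_symm, hyo x, map_zero]
      rwa [hNsa] at h
    have h0 := hgeone ⟨y, hymem⟩
    rw [show (⟪N ⟨y, hymem⟩, y⟫_ℂ) = 0 from hyo ⟨y, hymem⟩] at h0
    simp only [Complex.zero_re] at h0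
    have : ‖y‖ = 0 := by nlinarith [norm_nonneg y]
    exact norm_eq_zero.mp this
  -- final estimate
  intro v
  show ‖Rneg (A ⟨(v : H), hDA v.prop⟩)‖ ≤ ‖Rh v‖
  refine le_of_forall_pos_le_add ?_
  intro ε hε
  obtain ⟨y, hyS, hy⟩ := Metric.mem_closure_iff.mp
    (hdense (A ⟨(v : H), hDA v.prop⟩)) (ε / 2) (by positivity)
  obtain ⟨w, hw⟩ := hyS
  have hdist : ‖A ⟨(v : H), hDA v.prop⟩ - N w‖ < ε / 2 := by
    rw [show N w = y from hw, ← dist_eq_norm]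
    exact hy
  have hble : ‖Rh w‖ ≤ ε / 2 + ‖Rh v‖ := by
    have h2 : ‖Rh w‖ ^ 2 = (⟪N w, (w : H)⟫_ℂ).re := (hnormsq w).symm
    have h3 : ⟪N w, (w : H)⟫_ℂ
        = ⟪N w - A ⟨(v : H), hDA v.prop⟩, (w : H)⟫_ℂ
          + ⟪A ⟨(v : H), hDA v.prop⟩, (w : H)⟫_ℂ := by
      rw [← inner_add_left]
      congr 1
      abel
    have h4 : (⟪N w - A ⟨(v : H), hDA v.prop⟩, (w : H)⟫_ℂ).re ≤ (ε / 2) * ‖Rh w‖ := by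
      have hr : (⟪N w - A ⟨(v : H), hDA v.prop⟩, (w : H)⟫_ℂ).re
          ≤ ‖⟪N w - A ⟨(v : H), hDA v.prop⟩, (w : H)⟫_ℂ‖ := by
        exact Complex.re_le_norm _
      have h5 := norm_inner_le_norm (𝕜 := ℂ) (N w - A ⟨(v : H), hDA v.prop⟩) ((w : H))
      have h6 := hnormle w
      have h7 : ‖N w - A ⟨(v : H), hDA v.prop⟩‖ ≤ ε / 2 := by
        rw [norm_sub_rev]; exact hdist.le
      nlinarith [norm_nonneg (N w - A ⟨(v : H), hDA v.prop⟩), norm_nonneg ((w : H)),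
        norm_nonneg (Rh w)]
    have h5 : (⟪A ⟨(v : H), hDA v.prop⟩, (w : H)⟫_ℂ).re ≤ ‖Rh v‖ * ‖Rh w‖ := by
      have hr : (⟪A ⟨(v : H), hDA v.prop⟩, (w : H)⟫_ℂ).re
          ≤ ‖⟪A ⟨(v : H), hDA v.prop⟩, (w : H)⟫_ℂ‖ := by
        exact Complex.re_le_norm _
      exact hr.trans (hCS v w)
    have h8 : (⟪N w, (w : H)⟫_ℂ).re
        = (⟪N w - A ⟨(v : H), hDA v.prop⟩, (w : H)⟫_ℂ).re
          + (⟪A ⟨(v : H), hDA v.prop⟩, (w : H)⟫_ℂ).re := by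
      rw [h3, Complex.add_re]
    nlinarith [norm_nonneg (Rh w), norm_nonneg (Rh v), hε]
  have hRnegN : Rneg (N w) = Rh w := by
    rw [← hsq w]
    exact hinv ⟨Rhalf ⟨(w : H), hNR w.prop⟩, hsq_mem w⟩
  have hsplit : Rneg (A ⟨(v : H), hDA v.prop⟩)
      = Rneg (A ⟨(v : H), hDA v.prop⟩ - N w) + Rneg (N w) := by
    rw [← map_add]
    congr 1
    abel
  calc ‖Rneg (A ⟨(v : H), hDA v.prop⟩)‖
      ≤ ‖Rneg (A ⟨(v : H), hDA v.prop⟩ - N w)‖ + ‖Rneg (N w)‖ := by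
        rw [hsplit]; exact norm_add_le _ _
    _ ≤ ‖Rneg‖ * ‖A ⟨(v : H), hDA v.prop⟩ - N w‖ + ‖Rh w‖ := by
        rw [hRnegN]
        exact add_le_add_left (Rneg.le_opNorm _) _
    _ ≤ 1 * (ε / 2) + (ε / 2 + ‖Rh v‖) := by
        have := mul_le_mul hRnegnorm hdist.le (norm_nonneg _) zero_le_one
        exact add_le_add this hble
    _ ≤ ‖Rh v‖ + ε := by linarith
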